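/- Suppose A : [0,T] → ℝ satisfies C₁|t−s|^{γ₁} ≤ A_t − A_s ≤ C₂|t−s|^{γ₂} for all 0 ≤ s ≤ t ≤ T, with 1 ≥ γ₁ ≥ γ₂ > 0. Then for all 0 ≤ s < t ≤ T, 1 ≤ m̃_{s,t}/m_{s,t} ≤ 2^{2γ₁+1} (C₂²(2γ₁+1))/(C₁²(2γ₂+1)) · |t−s|^{−2(γ₁−γ₂)}. -/

import Mathlib

open MeasureTheory intervalIntegral Real

private lemma rpow_int_aux {p : ℝ} (hp : 0 < p) (L : ℝ) :
    ∫ x in (0:ℝ)..L, x ^ p = L ^ (p + 1) / (p + 1) := by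
  rw [integral_rpow (Or.inl (by linarith))]
  rw [Real.zero_rpow (by linarith : p + 1 ≠ 0)]
  ring

private lemma cont_rpow {p : ℝ} (hp : 0 < p) : Continuous fun x : ℝ => x ^ p :=
  continuous_iff_continuousAt.mpr fun x => Real.continuousAt_rpow_const x p (Or.inr hp.le)

/-- expansion of ∫ (A - c)² -/
private lemma expand_sq {A : ℝ → ℝ} {s t : ℝ} (hst : s ≤ t)
    (hA : ContinuousOn A (Set.Icc s t)) (c : ℝ) :
    (∫ r in s..t, (A r - c) ^ 2)
      = (∫ r in s..t, (A r) ^ 2) - 2*c*(∫ r in s..t, A r) + (t-s)*c^2 := by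
  have hAi : IntervalIntegrable A volume s t :=
    (hA.mono (by rw [Set.uIcc_of_le hst])).intervalIntegrable
  have hA2i : IntervalIntegrable (fun r => (A r)^2) volume s t :=
    (((hA.pow 2).mono (by rw [Set.uIcc_of_le hst]))).intervalIntegrable
  have : (fun r => (A r - c)^2) = fun r => (A r)^2 - (2*c*A r - c^2) :=
    funext fun r => by ring
  rw [this, intervalIntegral.integral_sub hA2i (((hAi.const_mul (2*c))).sub
      intervalIntegrable_const),
    intervalIntegral.integral_sub (hAi.const_mul (2*c)) intervalIntegrable_const,
    intervalIntegral.integral_const_mul, intervalIntegral.integral_const, smul_eq_mul]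
  ring

/-- lower bound on ∫ (A - c)², any c -/
private lemma lower_bound {A : ℝ → ℝ} {s t C₁ γ₁ : ℝ} (hst : s < t) (hγ : 0 < γ₁)
    (hC : 0 < C₁) (hA : ContinuousOn A (Set.Icc s t))
    (hb : ∀ u v, s ≤ u → u ≤ v → v ≤ t → C₁ * (v - u) ^ γ₁ ≤ A v - A u) (c : ℝ) :
    C₁ ^ 2 / (2*γ₁ + 1) * ((t - s)/2) ^ (2*γ₁ + 1) ≤ ∫ r in s..t, (A r - c) ^ 2 := by
  set m : ℝ := (s + t)/2 with hm
  have hsm : s ≤ m := by simp only [hm]; linarith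
  have hmt : m ≤ t := by simp only [hm]; linarith
  have h2γ : (0:ℝ) < 2*γ₁ := by linarith
  have hcont : ContinuousOn (fun r => (A r - c)^2) (Set.Icc s t) :=
    ((hA.sub continuousOn_const).pow 2)
  have hi1 : IntervalIntegrable (fun r => (A r - c)^2) volume s m :=
    ((hcont.mono (by rw [Set.uIcc_of_le hsm]; exact Set.Icc_subset_Icc le_rfl hmt))).intervalIntegrable
  have hi2 : IntervalIntegrable (fun r => (A r - c)^2) volume m t :=
    ((hcont.mono (by rw [Set.uIcc_of_le hmt]; exact Set.Icc_subset_Icc hsm le_rfl))).intervalIntegrable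
  have hsplit : (∫ r in s..t, (A r - c)^2)
      = (∫ r in s..m, (A r - c)^2) + ∫ r in m..t, (A r - c)^2 :=
    (intervalIntegral.integral_add_adjacent_intervals hi1 hi2).symm
  have hn1 : 0 ≤ ∫ r in s..m, (A r - c)^2 :=
    intervalIntegral.integral_nonneg hsm (fun x _ => sq_nonneg _)
  have hn2 : 0 ≤ ∫ r in m..t, (A r - c)^2 :=
    intervalIntegral.integral_nonneg hmt (fun x _ => sq_nonneg _)
  have hKint : ∀ a b : ℝ, a ≤ b →
      (∫ r in a..b, C₁^2 * (r - a) ^ (2*γ₁)) = C₁^2 / (2*γ₁+1) * (b-a)^(2*γ₁+1) := by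
    intro a b hab
    rw [intervalIntegral.integral_const_mul]
    rw [intervalIntegral.integral_comp_sub_right (fun x => x ^ (2*γ₁)) a]
    rw [sub_self, rpow_int_aux h2γ]
    ring
  have hKint' : ∀ a b : ℝ, a ≤ b →
      (∫ r in a..b, C₁^2 * (b - r) ^ (2*γ₁)) = C₁^2 / (2*γ₁+1) * (b-a)^(2*γ₁+1) := by
    intro a b hab
    rw [intervalIntegral.integral_const_mul]
    rw [intervalIntegral.integral_comp_sub_left (fun x => x ^ (2*γ₁)) b]
    rw [sub_self, rpow_int_aux h2γ]
    ring
  have hKi : ∀ a b : ℝ, IntervalIntegrable (fun r => C₁^2 * (r - a) ^ (2*γ₁)) volume a b :=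
    fun a b => (Continuous.intervalIntegrable (((cont_rpow h2γ).comp (continuous_id.sub continuous_const)).const_smul (C₁^2)) a b)
  have hKi' : ∀ a b : ℝ, IntervalIntegrable (fun r => C₁^2 * (b - r) ^ (2*γ₁)) volume a b :=
    fun a b => (Continuous.intervalIntegrable
      (((cont_rpow h2γ).comp (continuous_const.sub continuous_id)).const_smul (C₁^2)) a b)
  have htm : t - m = (t-s)/2 := by simp only [hm]; ring
  have hms : m - s = (t-s)/2 := by simp only [hm]; ring
  have hsq : ∀ x : ℝ, 0 ≤ x → (x ^ γ₁)^2 = x ^ (2*γ₁) := by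
    intro x hx
    rw [← Real.rpow_natCast (x ^ γ₁) 2, ← Real.rpow_mul hx]
    norm_num [mul_comm]
  rcases le_total c (A m) with hc | hc
  · have hpt : ∀ r ∈ Set.Icc m t, C₁^2 * (r - m)^(2*γ₁) ≤ (A r - c)^2 := by
      intro r hr
      have h1 : C₁ * (r - m) ^ γ₁ ≤ A r - A m := hb m r hsm hr.1 hr.2
      have h0 : 0 ≤ (r - m) ^ γ₁ := Real.rpow_nonneg (by linarith [hr.1]) _
      have h2 : C₁ * (r - m) ^ γ₁ ≤ A r - c := by linarith
      have h3 : (C₁ * (r-m)^γ₁)^2 ≤ (A r - c)^2 :=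
        pow_le_pow_left₀ (by positivity) h2 2
      calc C₁^2 * (r - m)^(2*γ₁) = (C₁ * (r-m)^γ₁)^2 := by
              rw [mul_pow, hsq _ (by linarith [hr.1])]
        _ ≤ (A r - c)^2 := h3
    have hmono := intervalIntegral.integral_mono_on hmt (hKi m t) hi2 hpt
    rw [hKint m t hmt, htm] at hmono
    linarith
  · have hpt : ∀ r ∈ Set.Icc s m, C₁^2 * (m - r)^(2*γ₁) ≤ (A r - c)^2 := by
      intro r hr
      have h1 : C₁ * (m - r) ^ γ₁ ≤ A m - A r := hb r m hr.1 hr.2 hmt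
      have h0 : 0 ≤ (m - r) ^ γ₁ := Real.rpow_nonneg (by linarith [hr.2]) _
      have h2 : C₁ * (m - r) ^ γ₁ ≤ c - A r := by linarith
      have h3 : (C₁ * (m-r)^γ₁)^2 ≤ (c - A r)^2 :=
        pow_le_pow_left₀ (by positivity) h2 2
      calc C₁^2 * (m - r)^(2*γ₁) = (C₁ * (m-r)^γ₁)^2 := by
              rw [mul_pow, hsq _ (by linarith [hr.2])]
        _ ≤ (c - A r)^2 := h3
        _ = (A r - c)^2 := by ring
    have hmono := intervalIntegral.integral_mono_on hsm (hKi' s m) hi1 hpt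
    rw [hKint' s m hsm, hms] at hmono
    linarith

private lemma upper_bound {A : ℝ → ℝ} {s t C₂ γ₂ : ℝ} (hst : s < t) (hγ₂ : 0 < γ₂)
    (hC₂ : 0 < C₂) (hA : ContinuousOn A (Set.Icc s t))
    (hlo : ∀ u v : ℝ, s ≤ u → u ≤ v → v ≤ t → 0 ≤ A v - A u)
    (hup : ∀ u v : ℝ, s ≤ u → u ≤ v → v ≤ t → A v - A u ≤ C₂ * (v - u) ^ γ₂) :
    (∫ r in s..t, (A r - A s) ^ 2) ≤ C₂^2/(2*γ₂+1) * (t-s)^(2*γ₂+1) := by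
  have h2γ : (0:ℝ) < 2*γ₂ := by linarith
  have hsq : ∀ x : ℝ, 0 ≤ x → (x ^ γ₂)^2 = x ^ (2*γ₂) := by
    intro x hx
    rw [← Real.rpow_natCast (x ^ γ₂) 2, ← Real.rpow_mul hx]
    norm_num [mul_comm]
  have hi : IntervalIntegrable (fun r => (A r - A s)^2) volume s t :=
    (((hA.sub continuousOn_const).pow 2).mono
      (by rw [Set.uIcc_of_le hst.le])).intervalIntegrable
  have hKi : IntervalIntegrable (fun r => C₂^2 * (r - s) ^ (2*γ₂)) volume s t :=
    Continuous.intervalIntegrable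
      (((cont_rpow h2γ).comp (continuous_id.sub continuous_const)).const_smul (C₂^2)) s t
  have hpt : ∀ r ∈ Set.Icc s t, (A r - A s)^2 ≤ C₂^2 * (r - s)^(2*γ₂) := by
    intro r hr
    have h1 : A r - A s ≤ C₂ * (r - s) ^ γ₂ := hup s r le_rfl hr.1 hr.2
    have h0 : 0 ≤ A r - A s := hlo s r le_rfl hr.1 hr.2
    calc (A r - A s)^2 ≤ (C₂ * (r-s)^γ₂)^2 := pow_le_pow_left₀ h0 h1 2
      _ = C₂^2 * (r - s)^(2*γ₂) := by rw [mul_pow, hsq _ (by linarith [hr.1])]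
  have hmono := intervalIntegral.integral_mono_on hst.le hi hKi hpt
  have hKint : (∫ r in s..t, C₂^2 * (r - s) ^ (2*γ₂))
      = C₂^2 / (2*γ₂+1) * (t-s)^(2*γ₂+1) := by
    rw [intervalIntegral.integral_const_mul,
      intervalIntegral.integral_comp_sub_right (fun x => x ^ (2*γ₂)) s,
      sub_self, rpow_int_aux h2γ]
    ring
  linarith [hmono, hKint.symm ▸ hmono]

/-- Bounds on the ratio `m̃_{s,t}/m_{s,t}` for a two-sided Hölder increasing `A`. -/
theorem stmt5 (T C₁ C₂ γ₁ γ₂ : ℝ) (A : ℝ → ℝ)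
    (hγ₁ : γ₁ ≤ 1) (hγ : γ₂ ≤ γ₁) (hγ₂ : 0 < γ₂) (hC₁ : 0 < C₁) (hC₂ : 0 < C₂)
    (hA : ContinuousOn A (Set.Icc 0 T))
    (hbound : ∀ s t : ℝ, 0 ≤ s → s ≤ t → t ≤ T →
      C₁ * |t - s| ^ γ₁ ≤ A t - A s ∧ A t - A s ≤ C₂ * |t - s| ^ γ₂)
    (s t : ℝ) (hs : 0 ≤ s) (hst : s < t) (htT : t ≤ T) :
    1 ≤ ((t - s)⁻¹ * ∫ r in s..t, (A r - A s) ^ 2)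
        / ((t - s)⁻¹ * ∫ r in s..t, (A r - (t - s)⁻¹ * ∫ u in s..t, A u) ^ 2)
    ∧ ((t - s)⁻¹ * ∫ r in s..t, (A r - A s) ^ 2)
        / ((t - s)⁻¹ * ∫ r in s..t, (A r - (t - s)⁻¹ * ∫ u in s..t, A u) ^ 2)
      ≤ 2 ^ (2 * γ₁ + 1) * (C₂ ^ 2 * (2 * γ₁ + 1)) / (C₁ ^ 2 * (2 * γ₂ + 1))
          * |t - s| ^ (-(2 * (γ₁ - γ₂))) := by
  have ht : (0:ℝ) < t - s := by linarith
  have hγ₁' : (0:ℝ) < γ₁ := lt_of_lt_of_le hγ₂ hγ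
  have hA' : ContinuousOn A (Set.Icc s t) :=
    hA.mono (Set.Icc_subset_Icc hs htT)
  have hb : ∀ u v : ℝ, s ≤ u → u ≤ v → v ≤ t → C₁ * (v - u) ^ γ₁ ≤ A v - A u := by
    intro u v h1 h2 h3
    have := (hbound u v (by linarith) h2 (by linarith)).1
    rwa [abs_of_nonneg (by linarith)] at this
  have hub : ∀ u v : ℝ, s ≤ u → u ≤ v → v ≤ t → A v - A u ≤ C₂ * (v - u) ^ γ₂ := by
    intro u v h1 h2 h3
    have := (hbound u v (by linarith) h2 (by linarith)).2
    rwa [abs_of_nonneg (by linarith)] at this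
  have hlo : ∀ u v : ℝ, s ≤ u → u ≤ v → v ≤ t → 0 ≤ A v - A u := by
    intro u v h1 h2 h3
    have := hb u v h1 h2 h3
    have h0 : 0 ≤ C₁ * (v - u) ^ γ₁ := mul_nonneg hC₁.le (Real.rpow_nonneg (by linarith) _)
    linarith
  set Ibar : ℝ := (t - s)⁻¹ * ∫ u in s..t, A u with hIbar
  set M : ℝ := ∫ r in s..t, (A r - Ibar) ^ 2 with hM
  set Mt : ℝ := ∫ r in s..t, (A r - A s) ^ 2 with hMt
  set Klow : ℝ := C₁ ^ 2 / (2*γ₁ + 1) * ((t - s)/2) ^ (2*γ₁ + 1) with hKlow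
  set Kup : ℝ := C₂^2/(2*γ₂+1) * (t-s)^(2*γ₂+1) with hKup
  have hlowM : Klow ≤ M := lower_bound hst hγ₁' hC₁ hA' hb Ibar
  have hKlowpos : 0 < Klow := by
    have : (0:ℝ) < ((t - s)/2) ^ (2*γ₁ + 1) := Real.rpow_pos_of_pos (by linarith) _
    positivity
  have hMpos : 0 < M := lt_of_lt_of_le hKlowpos hlowM
  have hupMt : Mt ≤ Kup := upper_bound hst hγ₂ hC₂ hA' hlo hub
  -- M ≤ Mt
  have hIA : (∫ u in s..t, A u) = (t - s) * Ibar := by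
    rw [hIbar]; field_simp
  have hexp1 : M = (∫ r in s..t, (A r)^2) - 2*Ibar*((t-s)*Ibar) + (t-s)*Ibar^2 := by
    rw [hM, expand_sq hst.le hA' Ibar, hIA]
  have hexp2 : Mt = (∫ r in s..t, (A r)^2) - 2*(A s)*((t-s)*Ibar) + (t-s)*(A s)^2 := by
    rw [hMt, expand_sq hst.le hA' (A s), hIA]
  have hMMt : M ≤ Mt := by nlinarith [sq_nonneg (A s - Ibar), ht]
  have habs : |t - s| = t - s := abs_of_pos ht
  rw [habs]
  constructor
  · rw [le_div_iff₀ (by positivity), one_mul]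
    have : (0:ℝ) < (t-s)⁻¹ := by positivity
    nlinarith
  · have hsimp : ((t - s)⁻¹ * Mt) / ((t - s)⁻¹ * M) = Mt / M := by
      rw [mul_div_mul_left _ _ (by positivity : (t-s)⁻¹ ≠ 0)]
    rw [hsimp]
    have hdiv : Mt / M ≤ Kup / Klow :=
      div_le_div₀ (by positivity) hupMt hKlowpos hlowM
    refine le_trans hdiv (le_of_eq ?_)
    have e1 : ((t-s)/2) ^ (2*γ₁+1) = (t-s)^(2*γ₁+1) / 2^(2*γ₁+1) :=
      Real.div_rpow ht.le (by norm_num) _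
    have e2 : (t-s)^(2*γ₂+1) = (t-s)^(-(2*(γ₁-γ₂))) * (t-s)^(2*γ₁+1) := by
      rw [← Real.rpow_add ht]; ring_nf
    have hx1 : (0:ℝ) < (t-s)^(2*γ₁+1) := Real.rpow_pos_of_pos ht _
    have hx2 : (0:ℝ) < (2:ℝ)^(2*γ₁+1) := Real.rpow_pos_of_pos two_pos _
    rw [hKup, hKlow, e1, e2]
    field_simp
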